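/- Let a: [r₀, ∞) → ℝ be nondecreasing, positive, differentiable, with r·a'(r) ≤ (n + λ²/4)·a(r) + b(r) for an auxiliary nonnegative term b, and suppose more precisely (as for λ-hypersurfaces) that for r₁ > r₂ ≥ r₀: r₁^{-n-λ²/4} a(r₁) - r₂^{-n-λ²/4} a(r₂) ≤ (2n+λ²)(r₁^{-n-2-λ²/4} + r₂^{-n-2-λ²/4}) a(r₁). Then with r₁ = t+1, r₂ = t, one gets (1 - 2(2n+λ²)(t+1)^{n+λ²/4}/t^{n+2+λ²/4})·a(t+1) ≤ a(t)·((t+1)/t)^{n+λ²/4}; in particular there exist constants C₁(n,λ) and c(n,λ) such that for all t ≥ C₁(n,λ): a(t+1) - a(t) ≤ c(n,λ)·a(t)/t and a(t+1) ≤ 2a(t). -/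

import Mathlib

open Real

set_option maxHeartbeats 1000000

lemma pow_one_add_aux (m : ℕ) {x : ℝ} (hx : 0 ≤ x) (hx1 : x ≤ 1) :
    (1+x)^m ≤ 1 + ((2:ℝ)^m - 1)*x := by
  induction m with
  | zero => simp
  | succ k ih =>
    have h2 : (1:ℝ) ≤ 2^k := one_le_pow₀ (by norm_num)
    have h3 : (0:ℝ) ≤ (2:ℝ)^k - 1 := by linarith
    calc (1+x)^(k+1) = (1+x)^k * (1+x) := pow_succ _ _
    _ ≤ (1 + ((2:ℝ)^k-1)*x) * (1+x) := by nlinarith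
    _ ≤ 1 + ((2:ℝ)^(k+1)-1)*x := by
      have hxx : x*x ≤ x := mul_le_of_le_one_right hx hx1
      have h4 : (2:ℝ)^(k+1) = 2*2^k := by ring
      nlinarith


/-- Analytic growth lemma (with `α = n + λ²/4` and `K = 2n + λ²`): if a positive
nondecreasing function `a` satisfies
`(t+1)^{-α}a(t+1) - t^{-α}a(t) ≤ K((t+1)^{-α-2} + t^{-α-2})a(t+1)` for all `t ≥ r₀`,
then `(1 - 2K(t+1)^α/t^{α+2})·a(t+1) ≤ a(t)·((t+1)/t)^α` for `t ≥ max r₀ 1`, and there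
exist constants `C₁(n,λ)`, `c(n,λ)` with `a(t+1) - a(t) ≤ c·a(t)/t` and
`a(t+1) ≤ 2a(t)` for all `t ≥ C₁`. -/
theorem area_doubling_growth_lemma
    (n : ℕ) (lam r₀ : ℝ) (hr₀ : 0 < r₀) (a : ℝ → ℝ)
    (ha_pos : ∀ t : ℝ, r₀ ≤ t → 0 < a t)
    (ha_mono : ∀ s t : ℝ, r₀ ≤ s → s ≤ t → a s ≤ a t)
    (hineq : ∀ t : ℝ, r₀ ≤ t →
      (t+1) ^ (-((n:ℝ) + lam^2/4)) * a (t+1) - t ^ (-((n:ℝ) + lam^2/4)) * a t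
        ≤ (2*(n:ℝ) + lam^2) * ((t+1) ^ (-((n:ℝ) + lam^2/4) - 2)
            + t ^ (-((n:ℝ) + lam^2/4) - 2)) * a (t+1)) :
    (∀ t : ℝ, max r₀ 1 ≤ t →
      (1 - 2*(2*(n:ℝ) + lam^2) * (t+1) ^ ((n:ℝ) + lam^2/4) / t ^ ((n:ℝ) + lam^2/4 + 2))
          * a (t+1)
        ≤ a t * ((t+1)/t) ^ ((n:ℝ) + lam^2/4)) ∧
    ∃ C₁ c : ℝ, 0 < c ∧ ∀ t : ℝ, C₁ ≤ t →
      a (t+1) - a t ≤ c * a t / t ∧ a (t+1) ≤ 2 * a t := by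
  set α : ℝ := (n:ℝ) + lam^2/4 with hαdef
  set K : ℝ := 2*(n:ℝ) + lam^2 with hKdef
  have hα0 : 0 ≤ α := by positivity
  have hK0 : 0 ≤ K := by positivity
  have hmain : ∀ t : ℝ, max r₀ 1 ≤ t →
      (1 - 2*K*(t+1)^α/t^(α+2)) * a (t+1) ≤ a t * ((t+1)/t)^α := by
    intro t ht
    have ht1 : (1:ℝ) ≤ t := le_trans (le_max_right _ _) ht
    have htr : r₀ ≤ t := le_trans (le_max_left _ _) ht
    have ht0 : (0:ℝ) < t := lt_of_lt_of_le one_pos ht1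
    have ht10 : (0:ℝ) < t+1 := by linarith
    have hP : 0 < (t+1)^α := rpow_pos_of_pos ht10 _
    have hQ : 0 < t^α := rpow_pos_of_pos ht0 _
    have hQP : t^α ≤ (t+1)^α := rpow_le_rpow ht0.le (by linarith) hα0
    have hA : 0 < a (t+1) := ha_pos _ (by linarith)
    have ha0 : 0 < a t := ha_pos _ htr
    have h := hineq t htr
    have e1 : (t+1) ^ (-α) = ((t+1)^α)⁻¹ := rpow_neg ht10.le _
    have e2 : t ^ (-α) = (t^α)⁻¹ := rpow_neg ht0.le _
    have e3 : (t+1) ^ (-α - 2) = ((t+1)^α * (t+1)^2)⁻¹ := by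
      rw [show -α - 2 = -(α+2) by ring, rpow_neg ht10.le, rpow_add ht10, rpow_two]
    have e4 : t ^ (-α - 2) = (t^α * t^2)⁻¹ := by
      rw [show -α - 2 = -(α+2) by ring, rpow_neg ht0.le, rpow_add ht0, rpow_two]
    have e5 : t^(α+2) = t^α * t^2 := by rw [rpow_add ht0, rpow_two]
    have e6 : ((t+1)/t)^α = (t+1)^α / t^α := div_rpow ht10.le ht0.le _
    rw [e1, e2, e3, e4] at h
    rw [e5, e6]
    set P := (t+1)^α
    set Q := t^α
    have hcomp : Q * t^2 ≤ P * (t+1)^2 :=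
      mul_le_mul hQP (by nlinarith) (by positivity) hP.le
    have hinv : (P*(t+1)^2)⁻¹ ≤ (Q*t^2)⁻¹ := by
      apply inv_anti₀ (by positivity) hcomp
    have h2 : K * ((P*(t+1)^2)⁻¹ + (Q*t^2)⁻¹) * a (t+1)
        ≤ 2*K*(Q*t^2)⁻¹ * a (t+1) := by
      nlinarith [mul_nonneg hK0 (sub_nonneg.2 hinv), hA.le,
        mul_nonneg (mul_nonneg hK0 (sub_nonneg.2 hinv)) hA.le]
    have step : P⁻¹ * a (t+1) - 2*K*(Q*t^2)⁻¹ * a (t+1) ≤ Q⁻¹ * a t := by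
      linarith
    calc (1 - 2*K*P/(Q*t^2)) * a (t+1)
        = P * (P⁻¹ * a (t+1) - 2*K*(Q*t^2)⁻¹ * a (t+1)) := by
          field_simp
      _ ≤ P * (Q⁻¹ * a t) := by
          exact mul_le_mul_of_nonneg_left step hP.le
      _ = a t * (P/Q) := by field_simp
  refine ⟨hmain, ?_⟩
  set m : ℕ := ⌈α⌉₊ with hm
  set B : ℝ := (2:ℝ)^m with hB
  have hB1 : (1:ℝ) ≤ B := one_le_pow₀ (by norm_num)
  set D : ℝ := 2*B*K with hD
  have hD0 : 0 ≤ D := by positivity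
  refine ⟨max (max r₀ 1) (max (4*D+1) (4*B)), B + 2*D, by linarith, ?_⟩
  intro t ht
  have ht1 : (1:ℝ) ≤ t := le_trans (le_trans (le_max_right _ _) (le_max_left _ _)) ht
  have htr : r₀ ≤ t := le_trans (le_trans (le_max_left _ _) (le_max_left _ _)) ht
  have htD : 4*D + 1 ≤ t := le_trans (le_trans (le_max_left _ _) (le_max_right _ _)) ht
  have htB : 4*B ≤ t := le_trans (le_trans (le_max_right _ _) (le_max_right _ _)) ht
  have ht0 : (0:ℝ) < t := lt_of_lt_of_le one_pos ht1
  have ht10 : (0:ℝ) < t+1 := by linarith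
  have hP : 0 < (t+1)^α := rpow_pos_of_pos ht10 _
  have hQ : 0 < t^α := rpow_pos_of_pos ht0 _
  have hA : 0 < a (t+1) := ha_pos _ (by linarith)
  have ha0 : 0 < a t := ha_pos _ htr
  have hmt := hmain t (max_le htr ht1)
  have e5 : t^(α+2) = t^α * t^2 := by rw [rpow_add ht0, rpow_two]
  rw [e5] at hmt
  set P := (t+1)^α
  set Q := t^α
  set A := a (t+1)
  set R : ℝ := ((t+1)/t)^α with hR
  set ε : ℝ := 2*K*P/(Q*t^2) with hε
  -- P ≤ B * Q
  have hPB : P ≤ B * Q := by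
    have h1 : (t+1)^α ≤ (2*t)^α := rpow_le_rpow ht10.le (by linarith) hα0
    have h2 : (2*t)^α = (2:ℝ)^α * t^α := mul_rpow (by norm_num) ht0.le
    have h3 : (2:ℝ)^α ≤ (2:ℝ)^(m:ℝ) :=
      rpow_le_rpow_of_exponent_le one_le_two (Nat.le_ceil α)
    have h4 : (2:ℝ)^((m:ℕ):ℝ) = B := by rw [rpow_natCast]
    calc P ≤ (2:ℝ)^α * t^α := by rw [← h2]; exact h1
      _ ≤ B * Q := by
          apply mul_le_mul_of_nonneg_right _ hQ.le
          rw [← h4]; exact h3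
  have hε0 : 0 ≤ ε := by positivity
  have hεt : ε * t^2 ≤ D := by
    rw [hε, div_mul_eq_mul_div, div_le_iff₀ (by positivity)]
    have h5 : 2*K*P*t^2 ≤ 2*K*(B*Q)*t^2 :=
      mul_le_mul_of_nonneg_right (mul_le_mul_of_nonneg_left hPB (by positivity)) (by positivity)
    calc 2*K*P*t^2 ≤ 2*K*(B*Q)*t^2 := h5
      _ = D*(Q*t^2) := by rw [hD]; ring
  have hεt1 : ε * t ≤ D := by
    nlinarith [hεt, mul_nonneg hε0 (show (0:ℝ) ≤ t^2 - t by nlinarith)]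
  have hx0 : (0:ℝ) ≤ 1/t := by positivity
  have hx1 : 1/t ≤ 1 := by rw [div_le_one ht0]; exact ht1
  have hRt : R ≤ 1 + (B-1)/t := by
    have h1 : (t+1)/t = 1 + 1/t := by field_simp
    have h3 : (1+1/t)^α ≤ (1+1/t)^((m:ℕ):ℝ) :=
      rpow_le_rpow_of_exponent_le (by linarith) (Nat.le_ceil α)
    have h4 : (1+1/t)^((m:ℕ):ℝ) = (1+1/t)^m := rpow_natCast _ _
    have h5 := pow_one_add_aux m hx0 hx1
    calc R = (1+1/t)^α := by rw [hR, h1]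
      _ ≤ (1+1/t)^m := by rw [← h4]; exact h3
      _ ≤ 1 + (B-1)*(1/t) := by rw [hB]; exact h5
      _ = 1 + (B-1)/t := by ring
  have hε14 : ε ≤ 1/4 := by nlinarith [hεt1, mul_nonneg hε0 ht0.le]
  have hR54 : R ≤ 5/4 := by
    have h9 : (B-1)/t ≤ 1/4 := by rw [div_le_iff₀ ht0]; linarith
    linarith
  have hA2 : A ≤ 2 * a t := by
    nlinarith [hmt, mul_nonneg (by linarith : (0:ℝ) ≤ 1/4 - ε) hA.le,
      mul_le_mul_of_nonneg_left hR54 ha0.le]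
  refine ⟨?_, hA2⟩
  rw [le_div_iff₀ ht0]
  have h6 : R * t ≤ t + (B-1) := by
    calc R*t ≤ (1+(B-1)/t)*t := mul_le_mul_of_nonneg_right hRt ht0.le
      _ = t + (B-1) := by field_simp
  have h7 := mul_le_mul_of_nonneg_right hmt ht0.le
  have h8 : ε*t*A ≤ 2*D*a t := by
    nlinarith [mul_nonneg (sub_nonneg.2 hεt1) hA.le, mul_nonneg hD0 (sub_nonneg.2 hA2)]
  nlinarith [h7, h8, mul_le_mul_of_nonneg_left h6 ha0.le, ha0.le]
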